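/- Let s > 2 be an integer and let S = { x ∈ ℝ : x = ∑_{n=1}^∞ α_n / s^{α_1 + α_2 + ... + α_n} for some sequence (α_n) with α_n ∈ {1, 2, ..., s-1} for all n }. Then S has Lebesgue measure zero. -/

import Mathlib

/-- The set `S` of sums `∑ αₙ / s^(α₁+⋯+αₙ)` over digit sequences with values in `{1,…,s-1}`. -/
def Sset (s : ℕ) : Set ℝ :=
  {x : ℝ | ∃ α : ℕ → ℕ, (∀ n, 1 ≤ α n ∧ α n ≤ s - 1) ∧
    x = ∑' n : ℕ, (α n : ℝ) / (s : ℝ) ^ (∑ k ∈ Finset.range (n + 1), α k)}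

open Finset MeasureTheory Filter

noncomputable def gfun (s : ℕ) (B : Finset ℕ) : ℝ :=
  ∑ k ∈ B, ((k : ℝ) - (((B.filter (· < k)).sup id : ℕ) : ℝ)) / (s : ℝ) ^ k

lemma beta_lower {s : ℕ} {α : ℕ → ℕ} (hα : ∀ n, 1 ≤ α n ∧ α n ≤ s - 1) (n : ℕ) :
    n + 1 ≤ ∑ k ∈ Finset.range (n + 1), α k := by
  calc n + 1 = ∑ k ∈ Finset.range (n + 1), 1 := by simp
  _ ≤ ∑ k ∈ Finset.range (n + 1), α k := Finset.sum_le_sum fun k _ => (hα k).1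

lemma beta_strictMono {s : ℕ} {α : ℕ → ℕ} (hα : ∀ n, 1 ≤ α n ∧ α n ≤ s - 1) :
    StrictMono (fun n => ∑ k ∈ Finset.range (n + 1), α k) := by
  apply strictMono_nat_of_lt_succ
  intro n
  rw [Finset.sum_range_succ (n := n + 1)]
  have := (hα (n + 1)).1
  omega

lemma summable_terms {s : ℕ} (hs : 2 < s) {α : ℕ → ℕ}
    (hα : ∀ n, 1 ≤ α n ∧ α n ≤ s - 1) :
    Summable (fun n : ℕ => (α n : ℝ) / (s : ℝ) ^ (∑ k ∈ Finset.range (n + 1), α k)) := by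
  have hs0 : (0:ℝ) < s := by positivity
  refine Summable.of_nonneg_of_le (f := fun n : ℕ => (s : ℝ) * ((s:ℝ)⁻¹) ^ (n + 1))
    ?_ ?_ ?_
  · intro n; positivity
  · intro n
    have h1 : (α n : ℝ) ≤ s := by
      have := (hα n).2
      have : α n ≤ s := by omega
      exact_mod_cast this
    have h2 : (s:ℝ) ^ (n + 1) ≤ (s:ℝ) ^ (∑ k ∈ Finset.range (n + 1), α k) := by
      apply pow_le_pow_right₀ (by norm_num; omega) (beta_lower hα n)
    calc (α n : ℝ) / (s:ℝ)^(∑ k ∈ Finset.range (n + 1), α k) ≤ (s:ℝ) / (s:ℝ)^(n+1) :=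
          div_le_div₀ (le_of_lt hs0) h1 (by positivity) h2
    _ = (s:ℝ) * ((s:ℝ)⁻¹)^(n+1) := by rw [div_eq_mul_inv, inv_pow]
  · apply Summable.mul_left
    have h : ((s:ℝ)⁻¹) < 1 := by
      rw [inv_lt_one₀ (by positivity)]
      exact_mod_cast (by omega : 1 < s)
    exact ((summable_geometric_of_lt_one (by positivity) h).comp_injective (add_left_injective 1))

lemma cover (s : ℕ) (hs : 2 < s) (x : ℝ) (hx : x ∈ Sset s) (n : ℕ) :
    ∃ B ∈ (Finset.range (n + 1)).powerset,
      x ∈ Set.Icc (gfun s B) (gfun s B + ((s : ℝ)⁻¹) ^ n) := by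
  obtain ⟨α, hα, hxe⟩ := hx
  have hs0 : (0:ℝ) < s := by positivity
  set β : ℕ → ℕ := fun m => ∑ k ∈ Finset.range (m + 1), α k with hβdef
  have hmono : StrictMono β := beta_strictMono hα
  have hlow : ∀ m, m + 1 ≤ β m := beta_lower hα
  have hex : ∃ m, n < β m := ⟨n, by have := hlow n; omega⟩
  set M := Nat.find hex with hMdef
  have hMlt : n < β M := Nat.find_spec hex
  have hMle : ∀ m < M, β m ≤ n := fun m hm => by
    have := Nat.find_min hex hm; omega
  refine ⟨(Finset.range M).image β, ?_, ?_⟩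
  · rw [Finset.mem_powerset]
    intro j hj
    simp only [Finset.mem_image, Finset.mem_range] at hj ⊢
    obtain ⟨a, haM, rfl⟩ := hj
    have := hMle a haM
    omega
  · -- gfun equals the prefix sum
    have hinj : ∀ a ∈ Finset.range M, ∀ b ∈ Finset.range M, β a = β b → a = b :=
      fun a _ b _ h => hmono.injective h
    have hg : gfun s ((Finset.range M).image β)
        = ∑ m ∈ Finset.range M, (α m : ℝ) / (s:ℝ) ^ (β m) := by
      rw [gfun, Finset.sum_image hinj]
      refine Finset.sum_congr rfl fun m hm => ?_
      have hmM : m < M := Finset.mem_range.mp hm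
      have hfil : (((Finset.range M).image β).filter (· < β m)) = (Finset.range m).image β := by
        ext j
        simp only [Finset.mem_filter, Finset.mem_image, Finset.mem_range]
        constructor
        · rintro ⟨⟨a, haM, rfl⟩, hlt⟩
          exact ⟨a, hmono.lt_iff_lt.mp hlt, rfl⟩
        · rintro ⟨a, ham, rfl⟩
          exact ⟨⟨a, lt_trans ham hmM, rfl⟩, hmono ham⟩
      rw [hfil, Finset.sup_image]
      congr 1
      cases m with
      | zero =>
        simp only [Finset.range_zero, Finset.sup_empty, bot_eq_zero', Nat.cast_zero, sub_zero]
        have : β 0 = α 0 := by simp [hβdef]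
        rw [this]
      | succ j =>
        have hsup : Finset.sup (Finset.range (j+1)) β = β j := by
          refine le_antisymm (Finset.sup_le fun i hi => ?_) (Finset.le_sup (by simp))
          exact hmono.monotone (by simp at hi; omega)
        have hβs : β (j+1) = β j + α (j+1) := Finset.sum_range_succ α (j+1)
        have : id ∘ β = β := rfl
        simp only [Function.comp_def, id_eq]
        rw [hsup, hβs]
        push_cast
        ring
    -- splitting the sum
    have hsum : Summable (fun m : ℕ => (α m : ℝ) / (s:ℝ) ^ (β m)) := summable_terms hs hα
    have htail_sum : Summable (fun j : ℕ => (α (j + M) : ℝ) / (s:ℝ) ^ (β (j + M))) :=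
      hsum.comp_injective (add_left_injective M)
    have hsplit : (∑ m ∈ Finset.range M, (α m : ℝ) / (s:ℝ) ^ (β m))
        + ∑' j : ℕ, (α (j + M) : ℝ) / (s:ℝ) ^ (β (j + M)) = x := by
      rw [hxe]; exact Summable.sum_add_tsum_nat_add' htail_sum
    -- tail bounds
    have hβtail : ∀ j : ℕ, n + 1 + j ≤ β (j + M) := by
      intro j
      have h2 : β M + j ≤ β (j + M) := by
        induction j with
        | zero => simp
        | succ i ih =>
          have : β (i + M) < β (i + 1 + M) := hmono (by omega)
          omega
      omega
    have hterm : ∀ j : ℕ, (α (j + M) : ℝ) / (s:ℝ) ^ (β (j + M))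
        ≤ ((s:ℝ) - 1) * ((s:ℝ)⁻¹) ^ (n + 1) * ((s:ℝ)⁻¹) ^ j := by
      intro j
      have h1 : (α (j + M) : ℝ) ≤ (s:ℝ) - 1 := by
        have h := (hα (j + M)).2
        have : ((α (j + M) : ℕ) : ℝ) ≤ ((s - 1 : ℕ) : ℝ) := by exact_mod_cast h
        have hcast : ((s - 1 : ℕ) : ℝ) = (s:ℝ) - 1 := by
          have : 1 ≤ s := by omega
          push_cast [this]; ring
        linarith [hcast ▸ this]
      have h2 : (s:ℝ) ^ (n + 1 + j) ≤ (s:ℝ) ^ (β (j + M)) :=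
        pow_le_pow_right₀ (by exact_mod_cast (by omega : 1 ≤ s)) (hβtail j)
      calc (α (j + M) : ℝ) / (s:ℝ) ^ (β (j + M)) ≤ ((s:ℝ) - 1) / (s:ℝ) ^ (n + 1 + j) := by
            apply div_le_div₀ (by linarith [show (3:ℝ) ≤ (s:ℝ) by exact_mod_cast hs])
              h1 (by positivity) h2
      _ = ((s:ℝ) - 1) * ((s:ℝ)⁻¹) ^ (n + 1) * ((s:ℝ)⁻¹) ^ j := by
            rw [div_eq_mul_inv, ← inv_pow, pow_add]
            ring
    have hrlt : ((s:ℝ)⁻¹) < 1 := by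
      rw [inv_lt_one₀ (by positivity)]
      exact_mod_cast (by omega : 1 < s)
    have hgeo : Summable (fun j : ℕ => ((s:ℝ) - 1) * ((s:ℝ)⁻¹) ^ (n + 1) * ((s:ℝ)⁻¹) ^ j) :=
      (summable_geometric_of_lt_one (by positivity) hrlt).mul_left _
    have htail_le : (∑' j : ℕ, (α (j + M) : ℝ) / (s:ℝ) ^ (β (j + M))) ≤ ((s:ℝ)⁻¹) ^ n := by
      calc (∑' j : ℕ, (α (j + M) : ℝ) / (s:ℝ) ^ (β (j + M)))
          ≤ ∑' j : ℕ, ((s:ℝ) - 1) * ((s:ℝ)⁻¹) ^ (n + 1) * ((s:ℝ)⁻¹) ^ j :=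
            Summable.tsum_le_tsum hterm htail_sum hgeo
      _ = ((s:ℝ) - 1) * ((s:ℝ)⁻¹) ^ (n + 1) * (1 - (s:ℝ)⁻¹)⁻¹ := by
            rw [tsum_mul_left, tsum_geometric_of_lt_one (by positivity) hrlt]
      _ = ((s:ℝ)⁻¹) ^ n := by
            have hne : (s:ℝ) ≠ 0 := ne_of_gt hs0
            have hne1 : (s:ℝ) - 1 ≠ 0 := by
              have : (3:ℝ) ≤ (s:ℝ) := by exact_mod_cast hs
              linarith
            field_simp
            rw [pow_succ, mul_comm, mul_assoc, one_div, inv_mul_cancel₀ hne, mul_one]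
    have htail_nonneg : 0 ≤ ∑' j : ℕ, (α (j + M) : ℝ) / (s:ℝ) ^ (β (j + M)) :=
      tsum_nonneg fun j => by positivity
    rw [hg]
    constructor
    · linarith
    · linarith

theorem stmt1 (s : ℕ) (hs : 2 < s) : MeasureTheory.volume (Sset s) = 0 := by
  have hs0 : (0:ℝ) < s := by positivity
  have hbound : ∀ n : ℕ, volume (Sset s) ≤ ENNReal.ofReal (2 * (2 / (s:ℝ)) ^ n) := by
    intro n
    have hsub : Sset s ⊆ ⋃ B ∈ (Finset.range (n+1)).powerset,
        Set.Icc (gfun s B) (gfun s B + ((s:ℝ)⁻¹)^n) := by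
      intro x hx
      obtain ⟨B, hB, hxB⟩ := cover s hs x hx n
      exact Set.mem_biUnion hB hxB
    calc volume (Sset s)
        ≤ volume (⋃ B ∈ (Finset.range (n+1)).powerset,
            Set.Icc (gfun s B) (gfun s B + ((s:ℝ)⁻¹)^n)) := measure_mono hsub
    _ ≤ ∑ B ∈ (Finset.range (n+1)).powerset,
          volume (Set.Icc (gfun s B) (gfun s B + ((s:ℝ)⁻¹)^n)) :=
        measure_biUnion_finset_le _ _
    _ = ∑ B ∈ (Finset.range (n+1)).powerset, ENNReal.ofReal (((s:ℝ)⁻¹)^n) := by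
        refine Finset.sum_congr rfl fun B _ => ?_
        rw [Real.volume_Icc]
        congr 1
        ring
    _ = ((2:ENNReal)^(n+1)) * ENNReal.ofReal (((s:ℝ)⁻¹)^n) := by
        rw [Finset.sum_const, Finset.card_powerset, Finset.card_range, nsmul_eq_mul]
        norm_cast
    _ ≤ ENNReal.ofReal (2 * (2 / (s:ℝ)) ^ n) := by
        have h2 : ((2:ENNReal)^(n+1)) = ENNReal.ofReal ((2:ℝ)^(n+1)) := by
          rw [ENNReal.ofReal_pow (by norm_num)]
          norm_num
        rw [h2, ← ENNReal.ofReal_mul (by positivity)]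
        apply le_of_eq
        congr 1
        rw [div_pow, div_eq_mul_inv, ← inv_pow, pow_succ]
        ring
  have hlt : (2 / (s:ℝ)) < 1 := by
    rw [div_lt_one hs0]
    exact_mod_cast hs
  have h1 : Filter.Tendsto (fun n : ℕ => 2 * (2 / (s:ℝ)) ^ n) Filter.atTop (nhds 0) := by
    have := (tendsto_pow_atTop_nhds_zero_of_lt_one (by positivity) hlt).const_mul (2:ℝ)
    simpa using this
  have h2 : Filter.Tendsto (fun n : ℕ => ENNReal.ofReal (2 * (2 / (s:ℝ)) ^ n))
      Filter.atTop (nhds 0) := by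
    have := ENNReal.tendsto_ofReal h1
    simpa using this
  have : volume (Sset s) ≤ 0 := ge_of_tendsto' h2 hbound
  exact le_antisymm this (by simp)
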